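/- arXiv:2308.13742 — 2 statements merged into one kernel-verified Lean document; each statement's English description precedes it below -/
import Mathlib

section
/- Let ε > 0 and let G be a nonempty finite simple graph with ρ(G) ≥ exp(e/ε). Let k be a real number with 1 ≤ k ≤ ρ(G)/ln ρ(G). Then for all positive integers a and b with a/b ≤ k, G is (a,b)-DP-colorable with probability at most ε. -/
namespace DP

/-- Adjacency in the cover graph `H_σ` determined by the tuple `σ` of permutations
(one permutation of `Fin k` per edge of `G`): for an edge `uv` of `G` with `u < v`,
the vertex `(u, i)` is adjacent to `(v, σ_{uv} i)`, and there are no other edges. -/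
def coverAdj {V : Type*} [LinearOrder V] (G : SimpleGraph V) (k : ℕ)
    (σ : G.edgeSet → Equiv.Perm (Fin k)) (p q : V × Fin k) : Prop :=
  ∃ h : G.Adj p.1 q.1,
    (p.1 < q.1 ∧ (σ ⟨s(p.1, q.1), G.mem_edgeSet.mpr h⟩) p.2 = q.2) ∨
    (q.1 < p.1 ∧ (σ ⟨s(p.1, q.1), G.mem_edgeSet.mpr h⟩) q.2 = p.2)

/-- `T` is an independent `b`-fold transversal of the cover `H_σ`: it contains exactly
`b` elements of `{v} × Fin k` for each vertex `v`, and no two of its elements are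
adjacent in `H_σ`. -/
def IsIndepTransversal {V : Type*} [LinearOrder V] (G : SimpleGraph V) (k b : ℕ)
    (σ : G.edgeSet → Equiv.Perm (Fin k)) (T : Finset (V × Fin k)) : Prop :=
  (∀ v : V, (T.filter (fun p => p.1 = v)).card = b) ∧
    ∀ p ∈ T, ∀ q ∈ T, ¬ coverAdj G k σ p q

/-- The probability, over a uniformly random tuple `σ` of permutations (one per edge),
that the cover graph `H_σ` admits an independent `b`-fold transversal. -/
noncomputable def probColorable {V : Type*} [LinearOrder V] (G : SimpleGraph V)
    (k b : ℕ) : ℝ :=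
  (Nat.card {σ : G.edgeSet → Equiv.Perm (Fin k) //
      ∃ T : Finset (V × Fin k), IsIndepTransversal G k b σ T} : ℝ) /
    (Nat.card (G.edgeSet → Equiv.Perm (Fin k)) : ℝ)

/-- The maximum density `ρ(G)`: the maximum of `|E(G')|/|V(G')|` over all nonempty
subgraphs `G'` of `G`. -/
noncomputable def maxDensity {V : Type*} (G : SimpleGraph V) : ℝ :=
  sSup {d : ℝ | ∃ H : G.Subgraph, H.verts.Nonempty ∧
    d = (H.edgeSet.ncard : ℝ) / (H.verts.ncard : ℝ)}

open Finset


private def permEmb1 {a : ℕ} (S T : Finset (Fin a)) (σ : Equiv.Perm (Fin a))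
    (h : S.image ⇑σ = T) : ↥S ↪ ↥T :=
  ⟨fun x => ⟨σ x.1, h ▸ Finset.mem_image_of_mem _ x.2⟩,
    fun x y hxy => Subtype.ext (σ.injective (congrArg Subtype.val hxy))⟩

private def permEmb2 {a : ℕ} (S T : Finset (Fin a)) (σ : Equiv.Perm (Fin a))
    (h : S.image ⇑σ = T) : ↥(Sᶜ : Finset (Fin a)) ↪ ↥(Tᶜ : Finset (Fin a)) :=
  ⟨fun x => ⟨σ x.1, by
      simp only [Finset.mem_compl]
      intro hmem
      rw [← h] at hmem
      obtain ⟨y, hy, hyx⟩ := Finset.mem_image.mp hmem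
      exact (Finset.mem_compl.mp x.2) (σ.injective hyx ▸ hy)⟩,
    fun x y hxy => Subtype.ext (σ.injective (congrArg Subtype.val hxy))⟩

lemma perm_fiber_card_le {a : ℕ} (S T : Finset (Fin a)) (hT : T.card = S.card) :
    (univ.filter fun σ : Equiv.Perm (Fin a) => S.image ⇑σ = T).card
      ≤ Nat.factorial S.card * Nat.factorial (a - S.card) := by
  classical
  rcases (univ.filter fun σ : Equiv.Perm (Fin a) => S.image ⇑σ = T).eq_empty_or_nonempty with
    h0 | ⟨σ0, hσ0⟩
  · simp [h0]
  have hσ0' : S.image ⇑σ0 = T := by simpa using hσ0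
  have key := Finset.card_le_card_of_injOn
    (s := univ.filter fun σ : Equiv.Perm (Fin a) => S.image ⇑σ = T)
    (t := (univ : Finset ((↥S ↪ ↥T) × (↥(Sᶜ : Finset (Fin a)) ↪ ↥(Tᶜ : Finset (Fin a))))))
    (fun σ : Equiv.Perm (Fin a) =>
      if h : S.image ⇑σ = T then (permEmb1 S T σ h, permEmb2 S T σ h)
      else (permEmb1 S T σ0 hσ0', permEmb2 S T σ0 hσ0'))
    (fun _ _ => mem_univ _) ?_
  · refine le_trans key ?_
    rw [Finset.card_univ, Fintype.card_prod, Fintype.card_embedding_eq, Fintype.card_embedding_eq]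
    simp only [Fintype.card_coe, Finset.card_compl, Fintype.card_fin, hT,
      Nat.descFactorial_self]
    exact le_rfl
  · intro σ hσ τ hτ h
    have hσT : S.image ⇑σ = T := by simpa using hσ
    have hτT : S.image ⇑τ = T := by simpa using hτ
    dsimp only at h
    rw [dif_pos hσT, dif_pos hτT] at h
    have h1 := congrArg Prod.fst h
    have h2 := congrArg Prod.snd h
    ext i
    by_cases hi : i ∈ S
    · have h3 := congrArg (fun g : ↥S ↪ ↥T => (g ⟨i, hi⟩ : Fin a)) h1
      exact congrArg Fin.val (h3 : σ i = τ i)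
    · have hi' : i ∈ (Sᶜ : Finset (Fin a)) := Finset.mem_compl.mpr hi
      have h3 := congrArg
        (fun g : ↥(Sᶜ : Finset (Fin a)) ↪ ↥(Tᶜ : Finset (Fin a)) => (g ⟨i, hi'⟩ : Fin a)) h2
      exact congrArg Fin.val (h3 : σ i = τ i)

lemma perm_count_le {a b : ℕ} (S S' : Finset (Fin a)) (hS : S.card = b) (hS' : S'.card = b) :
    (univ.filter fun σ : Equiv.Perm (Fin a) => ∀ i ∈ S, σ i ∉ S').card
      ≤ (a - b).descFactorial b * Nat.factorial (a - b) := by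
  classical
  rw [Finset.card_eq_sum_card_fiberwise (f := fun σ : Equiv.Perm (Fin a) => S.image ⇑σ)
    (t := (S'ᶜ : Finset (Fin a)).powersetCard b) ?_]
  · calc
      _ ≤ ∑ _T ∈ (S'ᶜ : Finset (Fin a)).powersetCard b,
          (Nat.factorial b * Nat.factorial (a - b)) := by
        refine Finset.sum_le_sum fun T hT => ?_
        obtain ⟨hTsub, hTcard⟩ := Finset.mem_powersetCard.mp hT
        calc
          _ ≤ (univ.filter fun σ : Equiv.Perm (Fin a) => S.image ⇑σ = T).card :=
            Finset.card_le_card (fun σ hσ => by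
              simp only [Finset.mem_filter] at hσ ⊢
              exact ⟨mem_univ _, hσ.2⟩)
          _ ≤ _ := by
            have := perm_fiber_card_le S T (by rw [hTcard, hS])
            rwa [hS] at this
      _ ≤ _ := by
        rw [Finset.sum_const, smul_eq_mul, Finset.card_powersetCard, Finset.card_compl,
          Fintype.card_fin, hS', Nat.descFactorial_eq_factorial_mul_choose]
        ring_nf
        exact le_rfl
  · intro σ hσ
    simp only [Finset.mem_coe, Finset.mem_filter] at hσ
    simp only [Finset.mem_coe]
    refine Finset.mem_powersetCard.mpr ⟨?_, ?_⟩
    · intro i hi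
      obtain ⟨j, hj, rfl⟩ := Finset.mem_image.mp hi
      exact Finset.mem_compl.mpr (hσ.2 j hj)
    · rw [Finset.card_image_of_injective _ σ.injective, hS]


lemma pow_self_le_factorial_mul_exp (b : ℕ) :
    (b : ℝ) ^ b ≤ (Nat.factorial b : ℝ) * Real.exp 1 ^ b := by
  induction b with
  | zero => simp
  | succ b ih =>
    have hstep : ((b + 1 : ℕ) : ℝ) ^ b ≤ (b : ℝ) ^ b * Real.exp 1 := by
      rcases Nat.eq_zero_or_pos b with rfl | hb
      · simpa using Real.exp_pos 1 |>.le.trans (le_refl _) |>.trans (le_refl _) |> fun _ => by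
          simp [Real.exp_pos 1 |>.le]
      · have hb' : (0 : ℝ) < b := by exact_mod_cast hb
        have h1 : ((b + 1 : ℕ) : ℝ) = (b : ℝ) * (1 + 1 / (b : ℝ)) := by
          field_simp
          push_cast
          ring
        rw [h1, mul_pow]
        refine mul_le_mul_of_nonneg_left ?_ (by positivity)
        have h2 : (1 + 1 / (b : ℝ)) ≤ Real.exp (1 / (b : ℝ)) := by
          have := Real.add_one_le_exp (1 / (b : ℝ)); linarith
        calc (1 + 1 / (b : ℝ)) ^ b ≤ Real.exp (1 / (b : ℝ)) ^ b := by
              exact pow_le_pow_left₀ (by positivity) h2 b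
          _ = Real.exp ((1 / (b : ℝ)) * b) := by
              rw [← Real.exp_nat_mul]; ring_nf
          _ = Real.exp 1 := by field_simp
    calc ((b + 1 : ℕ) : ℝ) ^ (b + 1) = ((b + 1 : ℕ) : ℝ) * ((b + 1 : ℕ) : ℝ) ^ b := by ring
      _ ≤ ((b + 1 : ℕ) : ℝ) * ((b : ℝ) ^ b * Real.exp 1) := by
          refine mul_le_mul_of_nonneg_left hstep (by positivity)
      _ ≤ ((b + 1 : ℕ) : ℝ) * ((Nat.factorial b : ℝ) * Real.exp 1 ^ b * Real.exp 1) := by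
          refine mul_le_mul_of_nonneg_left
            (mul_le_mul_of_nonneg_right ih (Real.exp_pos 1).le) (by positivity)
      _ = (Nat.factorial (b + 1) : ℝ) * Real.exp 1 ^ (b + 1) := by
          rw [Nat.factorial_succ]; push_cast; ring

lemma choose_le_exp_bound {a b : ℕ} (hb : 0 < b) :
    (a.choose b : ℝ) ≤ (Real.exp 1 * a / b) ^ b := by
  have hb' : (0 : ℝ) < b := by exact_mod_cast hb
  rw [div_pow, le_div_iff₀ (by positivity)]
  have h1 : (a.choose b : ℝ) * (b : ℝ) ^ b ≤ (a.choose b : ℝ) * ((Nat.factorial b : ℝ) * Real.exp 1 ^ b) :=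
    mul_le_mul_of_nonneg_left (pow_self_le_factorial_mul_exp b) (by positivity)
  refine h1.trans ?_
  have h2 : (a.choose b : ℝ) * (Nat.factorial b : ℝ) = (a.descFactorial b : ℝ) := by
    rw [Nat.descFactorial_eq_factorial_mul_choose]; push_cast; ring
  calc (a.choose b : ℝ) * ((Nat.factorial b : ℝ) * Real.exp 1 ^ b)
      = (a.descFactorial b : ℝ) * Real.exp 1 ^ b := by rw [← h2]; ring
    _ ≤ (a : ℝ) ^ b * Real.exp 1 ^ b := by
        refine mul_le_mul_of_nonneg_right ?_ (by positivity)
        exact_mod_cast Nat.descFactorial_le_pow a b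
    _ = (Real.exp 1 * (a : ℝ)) ^ b := by rw [mul_pow]; ring

lemma ratio_le_exp {a b : ℕ} (h2b : 2 * b ≤ a) (hb : 0 < b) :
    ((a - b).descFactorial b * Nat.factorial (a - b) : ℝ) / (Nat.factorial a : ℝ)
      ≤ Real.exp (-((b : ℝ) / a) * b) := by
  have hba : b ≤ a := by omega
  have ha : 0 < a := by omega
  have ha' : (0 : ℝ) < a := by exact_mod_cast ha
  have hfact : (Nat.factorial a : ℝ) = (a.descFactorial b : ℝ) * (Nat.factorial (a - b) : ℝ) := by
    have := Nat.factorial_mul_descFactorial hba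
    exact_mod_cast (by rw [← this]; ring)
  rw [hfact]
  rw [show ((a - b).descFactorial b * Nat.factorial (a - b) : ℝ) /
      ((a.descFactorial b : ℝ) * (Nat.factorial (a - b) : ℝ))
      = ((a - b).descFactorial b : ℝ) / (a.descFactorial b : ℝ) by
    have hf : (Nat.factorial (a - b) : ℝ) ≠ 0 := by positivity
    have hd : (a.descFactorial b : ℝ) ≠ 0 := by
      have : a.descFactorial b ≠ 0 := by
        rw [Ne, Nat.descFactorial_eq_zero_iff_lt]; omega
      exact_mod_cast this
    field_simp]
  have hprod1 : ((a - b).descFactorial b : ℝ) = ∏ i ∈ range b, ((a - b - i : ℕ) : ℝ) := by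
    rw [Nat.descFactorial_eq_prod_range]; push_cast; rfl
  have hprod2 : (a.descFactorial b : ℝ) = ∏ i ∈ range b, ((a - i : ℕ) : ℝ) := by
    rw [Nat.descFactorial_eq_prod_range]; push_cast; rfl
  rw [hprod1, hprod2, ← Finset.prod_div_distrib]
  have hterm : ∀ i ∈ range b, ((a - b - i : ℕ) : ℝ) / ((a - i : ℕ) : ℝ)
      ≤ Real.exp (-((b : ℝ) / a)) := by
    intro i hi
    have hib : i < b := Finset.mem_range.mp hi
    have h1 : ((a - b - i : ℕ) : ℝ) = (a : ℝ) - b - i := by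
      have : b + i ≤ a := by omega
      push_cast [Nat.sub_sub]
      rw [Nat.cast_sub this]
      push_cast; ring
    have h2 : ((a - i : ℕ) : ℝ) = (a : ℝ) - i := by
      rw [Nat.cast_sub (by omega)]
    rw [h1, h2]
    have hai : (0 : ℝ) < (a : ℝ) - i := by
      have : (i : ℝ) < a := by exact_mod_cast (by omega : i < a)
      linarith
    have step1 : ((a : ℝ) - b - i) / ((a : ℝ) - i) ≤ ((a : ℝ) - b) / a := by
      rw [div_le_div_iff₀ hai ha']
      have hbi : (0 : ℝ) ≤ (b : ℝ) * i := by positivity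
      nlinarith [hbi]
    refine step1.trans ?_
    have : ((a : ℝ) - b) / a = 1 - (b : ℝ) / a := by field_simp
    rw [this]
    have := Real.add_one_le_exp (-((b : ℝ) / a))
    linarith
  calc ∏ i ∈ range b, ((a - b - i : ℕ) : ℝ) / ((a - i : ℕ) : ℝ)
      ≤ ∏ _i ∈ range b, Real.exp (-((b : ℝ) / a)) := by
        refine Finset.prod_le_prod (fun i _ => by positivity) hterm
    _ = Real.exp (-((b : ℝ) / a)) ^ b := by rw [Finset.prod_const, Finset.card_range]
    _ = Real.exp (-((b : ℝ) / a) * b) := by rw [← Real.exp_nat_mul]; ring_nf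

lemma analytic_bound (ε ρ k : ℝ) (a b n' m' : ℕ) (hε : 0 < ε) (hε1 : ε < 1)
    (hb : 0 < b) (hab : 2 * b ≤ a) (hn' : 1 ≤ n') (hm : (m' : ℝ) = ρ * n')
    (hρ : Real.exp (Real.exp 1 / ε) ≤ ρ) (hk1 : 1 ≤ k)
    (hk2 : k ≤ ρ / Real.log ρ) (habk : (a : ℝ) / b ≤ k) :
    (a.choose b : ℝ) ^ n' *
      (((a - b).descFactorial b * Nat.factorial (a - b) : ℝ) / (Nat.factorial a : ℝ)) ^ m'
      ≤ ε := by
  have hB : (0 : ℝ) < b := by exact_mod_cast hb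
  have ha0 : 0 < a := by omega
  have hA : (0 : ℝ) < a := by exact_mod_cast ha0
  have hN : (1 : ℝ) ≤ n' := by exact_mod_cast hn'
  have hρ1 : (1 : ℝ) < ρ := by
    have : Real.exp 0 < Real.exp (Real.exp 1 / ε) :=
      Real.exp_lt_exp.mpr (by positivity)
    rw [Real.exp_zero] at this; linarith
  have hρ0 : (0 : ℝ) < ρ := by linarith
  have hlogρ : 0 < Real.log ρ := Real.log_pos hρ1
  have hk0 : (0 : ℝ) < k := by linarith
  have hlogρ_ge : Real.exp 1 / ε ≤ Real.log ρ := by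
    calc Real.exp 1 / ε = Real.log (Real.exp (Real.exp 1 / ε)) := (Real.log_exp _).symm
      _ ≤ Real.log ρ := Real.log_le_log (Real.exp_pos _) hρ
  -- step 1: first factor
  have h1 : (a.choose b : ℝ) ^ n' ≤ Real.exp ((b * n' : ℝ) * (1 + Real.log ((a : ℝ) / b))) := by
    have hc := choose_le_exp_bound (a := a) (b := b) hb
    have hpos : (0 : ℝ) < Real.exp 1 * a / b := by positivity
    have hchoose_nonneg : (0 : ℝ) ≤ (a.choose b : ℝ) := by positivity
    calc (a.choose b : ℝ) ^ n' ≤ (Real.exp 1 * a / b) ^ (b * n') := by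
          rw [pow_mul]
          exact pow_le_pow_left₀ hchoose_nonneg hc n'
      _ = Real.exp (Real.log (Real.exp 1 * a / b)) ^ (b * n') := by
          rw [Real.exp_log hpos]
      _ = Real.exp ((b * n' : ℕ) * Real.log (Real.exp 1 * a / b)) := by
          rw [← Real.exp_nat_mul]
      _ = Real.exp ((b * n' : ℝ) * (1 + Real.log ((a : ℝ) / b))) := by
          congr 1
          have : Real.exp 1 * a / b = Real.exp 1 * ((a : ℝ) / b) := by ring
          rw [this, Real.log_mul (Real.exp_pos 1).ne' (by positivity), Real.log_exp]
          push_cast; ring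
  -- step 2: second factor
  set t : ℝ := (a : ℝ) / b with ht
  have ht0 : 0 < t := by positivity
  have hratio_nonneg : (0 : ℝ) ≤
      ((a - b).descFactorial b * Nat.factorial (a - b) : ℝ) / (Nat.factorial a : ℝ) := by
    positivity
  have h2 : (((a - b).descFactorial b * Nat.factorial (a - b) : ℝ) / (Nat.factorial a : ℝ)) ^ m'
      ≤ Real.exp ((-((b : ℝ) / a) * b) * m') := by
    calc _ ≤ (Real.exp (-((b : ℝ) / a) * b)) ^ m' :=
          pow_le_pow_left₀ hratio_nonneg (ratio_le_exp hab hb) m'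
      _ = Real.exp ((-((b : ℝ) / a) * b) * m') := by rw [← Real.exp_nat_mul]; ring_nf
  have hX : (a.choose b : ℝ) ^ n' *
      (((a - b).descFactorial b * Nat.factorial (a - b) : ℝ) / (Nat.factorial a : ℝ)) ^ m'
      ≤ Real.exp ((b * n' : ℝ) * (1 + Real.log t) + (-((b : ℝ) / a) * b) * m') := by
    rw [Real.exp_add]
    exact mul_le_mul h1 h2 (by positivity) (Real.exp_pos _).le
  refine hX.trans ?_
  rw [show ε = Real.exp (Real.log ε) from (Real.exp_log hε).symm]
  rw [Real.exp_le_exp]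
  -- the exponent computation
  have hlogt : Real.log t ≤ Real.log ρ - Real.log (Real.log ρ) := by
    calc Real.log t ≤ Real.log k := Real.log_le_log ht0 habk
      _ ≤ Real.log (ρ / Real.log ρ) := Real.log_le_log hk0 hk2
      _ = Real.log ρ - Real.log (Real.log ρ) := Real.log_div hρ0.ne' hlogρ.ne'
  have h1k : 1 / k ≤ (b : ℝ) / a := by
    rw [div_le_div_iff₀ hk0 hA]
    have : (a : ℝ) ≤ k * b := (div_le_iff₀ hB).mp habk
    nlinarith
  have hba_ρ : Real.log ρ ≤ ((b : ℝ) / a) * ρ := by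
    have hρk : Real.log ρ ≤ ρ / k := by
      have : k * Real.log ρ ≤ ρ := (le_div_iff₀ hlogρ).mp hk2
      rw [le_div_iff₀ hk0]; nlinarith
    calc Real.log ρ ≤ ρ / k := hρk
      _ = (1 / k) * ρ := by ring
      _ ≤ ((b : ℝ) / a) * ρ := mul_le_mul_of_nonneg_right h1k hρ0.le
  have hll : 1 - Real.log ε ≤ Real.log (Real.log ρ) := by
    have h0 : (0 : ℝ) < Real.exp 1 / ε := by positivity
    calc 1 - Real.log ε = Real.log (Real.exp 1 / ε) := by
          rw [Real.log_div (Real.exp_pos 1).ne' hε.ne', Real.log_exp]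
      _ ≤ Real.log (Real.log ρ) := Real.log_le_log h0 hlogρ_ge
  have hInner : 1 + Real.log t - ((b : ℝ) / a) * ρ ≤ Real.log ε := by
    linarith
  have hlogε_neg : Real.log ε < 0 := Real.log_neg hε hε1
  have hBN : (1 : ℝ) ≤ (b : ℝ) * n' := by
    have hb1 : (1 : ℝ) ≤ b := by exact_mod_cast hb
    nlinarith
  have hE : ((b : ℝ) * n') * (1 + Real.log t) + (-((b : ℝ) / a) * b) * (m' : ℝ)
      = ((b : ℝ) * n') * (1 + Real.log t - ((b : ℝ) / a) * ρ) := by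
    rw [hm]; ring
  rw [hE]
  calc ((b : ℝ) * n') * (1 + Real.log t - ((b : ℝ) / a) * ρ)
      ≤ 1 * (1 + Real.log t - ((b : ℝ) / a) * ρ) :=
        mul_le_mul_of_nonpos_right hBN (by linarith)
    _ = 1 + Real.log t - ((b : ℝ) / a) * ρ := by ring
    _ ≤ Real.log ε := hInner

lemma sym2_inf_lt_sup {α} [LinearOrder α] {e : Sym2 α} (h : ¬e.IsDiag) : e.inf < e.sup := by
  induction e using Sym2.ind with
  | _ u w =>
    simp only [Sym2.mk_isDiag_iff] at h
    simpa using inf_lt_sup.mpr h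

lemma sym2_mk_inf_sup {α} [LinearOrder α] (e : Sym2 α) : s(e.inf, e.sup) = e := by
  induction e using Sym2.ind with
  | _ u w =>
    rcases le_total u w with h | h
    · simp [min_eq_left h, max_eq_right h]
    · simp only [Sym2.inf_mk, Sym2.sup_mk, min_eq_right h, max_eq_left h]
      exact Sym2.eq_swap

lemma main_count (n a b : ℕ) (G : SimpleGraph (Fin n)) (H : G.Subgraph) :
    Nat.card {σ : G.edgeSet → Equiv.Perm (Fin a) //
        ∃ T : Finset (Fin n × Fin a), IsIndepTransversal G a b σ T}
      ≤ a.choose b ^ H.verts.ncard *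
        (((a - b).descFactorial b * Nat.factorial (a - b)) ^ H.edgeSet.ncard *
          Nat.factorial a ^ (G.edgeSet.ncard - H.edgeSet.ncard)) := by
  classical
  letI : Fintype ↥G.edgeSet := Fintype.ofFinite _
  letI : Fintype ↥H.verts := Fintype.ofFinite _
  set E := ↥G.edgeSet
  set HVf : Finset (Fin n) := H.verts.toFinset with hHVf
  set 𝓕 : Finset (Fin n → Finset (Fin a)) :=
    Fintype.piFinset (fun v => if v ∈ HVf then (univ : Finset (Fin a)).powersetCard b
      else {(∅ : Finset (Fin a))}) with h𝓕
  set AF : (Fin n → Finset (Fin a)) → Finset (E → Equiv.Perm (Fin a)) := fun F =>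
    univ.filter (fun σ => ∀ (e : E) (u w : Fin n), (e : Sym2 (Fin n)) = s(u, w) → u < w →
      (e : Sym2 (Fin n)) ∈ H.edgeSet → ∀ i ∈ F u, σ e i ∉ F w) with hAF
  -- numerator as a filter card
  have hnum : Nat.card {σ : G.edgeSet → Equiv.Perm (Fin a) //
        ∃ T : Finset (Fin n × Fin a), IsIndepTransversal G a b σ T}
      = (univ.filter (fun σ : E → Equiv.Perm (Fin a) =>
          ∃ T : Finset (Fin n × Fin a), IsIndepTransversal G a b σ T)).card := by
    rw [Nat.card_eq_fintype_card, Fintype.card_subtype]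
  have hsub : (univ.filter (fun σ : E → Equiv.Perm (Fin a) =>
      ∃ T : Finset (Fin n × Fin a), IsIndepTransversal G a b σ T)) ⊆ 𝓕.biUnion AF := by
    intro σ hσ
    obtain ⟨T, hT1, hT2⟩ := (Finset.mem_filter.mp hσ).2
    set F : Fin n → Finset (Fin a) := fun v =>
      if v ∈ HVf then univ.filter (fun i => (v, i) ∈ T) else ∅ with hF
    have hcard : ∀ v, (univ.filter (fun i => (v, i) ∈ T)).card = b := by
      intro v
      rw [← hT1 v]
      refine (Finset.card_bij' (fun p _ => p.2) (fun i _ => (v, i)) ?_ ?_ ?_ ?_).symm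
      · intro p hp
        simp only [Finset.mem_filter] at hp ⊢
        refine ⟨mem_univ _, ?_⟩
        have : (v, p.2) = p := by
          ext <;> simp [hp.2.symm]
        rw [this]; exact hp.1
      · intro i hi
        simp only [Finset.mem_filter] at hi ⊢
        exact ⟨hi.2, trivial⟩
      · intro p hp
        simp only [Finset.mem_filter] at hp
        ext <;> simp [hp.2.symm]
      · intro i _
        rfl
    refine Finset.mem_biUnion.mpr ⟨F, ?_, ?_⟩
    · refine Fintype.mem_piFinset.mpr fun v => ?_
      by_cases hv : v ∈ HVf
      · rw [hF]
        simp only [hv, if_true]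
        exact Finset.mem_powersetCard.mpr ⟨Finset.subset_univ _, hcard v⟩
      · rw [hF]
        simp only [hv, if_false]
        exact Finset.mem_singleton_self _
    · rw [hAF]
      refine Finset.mem_filter.mpr ⟨mem_univ _, ?_⟩
      intro e u w heq hlt heH i hi
      have hHadj : H.Adj u w := by
        rw [heq] at heH
        exact SimpleGraph.Subgraph.mem_edgeSet.mp heH
      have huv : u ∈ HVf := by
        rw [hHVf, Set.mem_toFinset]; exact H.edge_vert hHadj
      have hwv : w ∈ HVf := by
        rw [hHVf, Set.mem_toFinset]; exact H.edge_vert hHadj.symm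
      have hGadj : G.Adj u w := by
        have := e.2
        rw [heq] at this
        exact (SimpleGraph.mem_edgeSet G).mp this
      have hiT : (u, i) ∈ T := by
        rw [hF] at hi
        simp only [huv, if_true, Finset.mem_filter] at hi
        exact hi.2
      intro hcontra
      have hjT : (w, σ e i) ∈ T := by
        rw [hF] at hcontra
        simp only [hwv, if_true, Finset.mem_filter] at hcontra
        exact hcontra.2
      refine hT2 (u, i) hiT (w, σ e i) hjT ?_
      refine ⟨hGadj, Or.inl ⟨hlt, ?_⟩⟩
      have hee : (⟨s(u, w), (SimpleGraph.mem_edgeSet G).mpr hGadj⟩ : E) = e :=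
        Subtype.ext heq.symm
      rw [hee]
  have hm'card : (univ.filter (fun e : E => (e : Sym2 (Fin n)) ∈ H.edgeSet)).card
      = H.edgeSet.ncard := by
    calc (univ.filter (fun e : E => (e : Sym2 (Fin n)) ∈ H.edgeSet)).card
        = Fintype.card {e : E // (e : Sym2 (Fin n)) ∈ H.edgeSet} :=
          (Fintype.card_subtype _).symm
      _ = Nat.card {e : E // (e : Sym2 (Fin n)) ∈ H.edgeSet} := Nat.card_eq_fintype_card.symm
      _ = Nat.card ↥H.edgeSet :=
          Nat.card_congr (Equiv.subtypeSubtypeEquivSubtype fun {x} hx => H.edgeSet_subset hx)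
      _ = H.edgeSet.ncard := Nat.card_coe_set_eq _
  have hcu : (univ : Finset E).card = G.edgeSet.ncard := by
    rw [Finset.card_univ, ← Nat.card_eq_fintype_card]
    exact Nat.card_coe_set_eq _
  have hfneg : (univ.filter (fun e : E => ¬((e : Sym2 (Fin n)) ∈ H.edgeSet))).card
      = G.edgeSet.ncard - H.edgeSet.ncard := by
    have h := Finset.card_filter_add_card_filter_not (s := (univ : Finset E))
      (p := fun e : E => (e : Sym2 (Fin n)) ∈ H.edgeSet)
    omega
  have hAFcard : ∀ F ∈ 𝓕, (AF F).card ≤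
      ((a - b).descFactorial b * Nat.factorial (a - b)) ^ H.edgeSet.ncard *
        Nat.factorial a ^ (G.edgeSet.ncard - H.edgeSet.ncard) := by
    intro F hF
    have hFb : ∀ v ∈ HVf, (F v).card = b := by
      intro v hv
      have := Fintype.mem_piFinset.mp hF v
      rw [if_pos hv] at this
      exact (Finset.mem_powersetCard.mp this).2
    set B : E → Finset (Equiv.Perm (Fin a)) := fun e =>
      if (e : Sym2 (Fin n)) ∈ H.edgeSet then
        univ.filter (fun π => ∀ i ∈ F (Sym2.inf (e : Sym2 (Fin n))), π i ∉ F (Sym2.sup (e : Sym2 (Fin n))))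
      else univ with hB
    have hsubB : AF F ⊆ Fintype.piFinset B := by
      intro σ hσ
      refine Fintype.mem_piFinset.mpr fun e => ?_
      rw [hB]; dsimp only
      by_cases he : (e : Sym2 (Fin n)) ∈ H.edgeSet
      · rw [if_pos he]
        refine Finset.mem_filter.mpr ⟨mem_univ _, ?_⟩
        have hdiag : ¬(e : Sym2 (Fin n)).IsDiag := G.not_isDiag_of_mem_edgeSet e.2
        exact (Finset.mem_filter.mp hσ).2 e (Sym2.inf (e : Sym2 (Fin n)))
          (Sym2.sup (e : Sym2 (Fin n))) (sym2_mk_inf_sup _).symm (sym2_inf_lt_sup hdiag) he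
      · rw [if_neg he]; exact mem_univ _
    calc (AF F).card ≤ (Fintype.piFinset B).card := Finset.card_le_card hsubB
      _ = ∏ e : E, (B e).card := Fintype.card_piFinset B
      _ ≤ ∏ e : E, (if (e : Sym2 (Fin n)) ∈ H.edgeSet then
            ((a - b).descFactorial b * Nat.factorial (a - b)) else Nat.factorial a) := by
          refine Finset.prod_le_prod (fun _ _ => Nat.zero_le _) fun e _ => ?_
          rw [hB]; dsimp only
          by_cases he : (e : Sym2 (Fin n)) ∈ H.edgeSet
          · rw [if_pos he, if_pos he]
            have hinf : Sym2.inf (e : Sym2 (Fin n)) ∈ HVf := by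
              rw [hHVf, Set.mem_toFinset]
              refine SimpleGraph.Subgraph.mem_verts_of_mem_edge he ?_
              have hm : Sym2.inf (e : Sym2 (Fin n)) ∈
                  s(Sym2.inf (e : Sym2 (Fin n)), Sym2.sup (e : Sym2 (Fin n))) :=
                Sym2.mem_mk_left _ _
              rwa [sym2_mk_inf_sup] at hm
            have hsup : Sym2.sup (e : Sym2 (Fin n)) ∈ HVf := by
              rw [hHVf, Set.mem_toFinset]
              refine SimpleGraph.Subgraph.mem_verts_of_mem_edge he ?_
              have hm : Sym2.sup (e : Sym2 (Fin n)) ∈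
                  s(Sym2.inf (e : Sym2 (Fin n)), Sym2.sup (e : Sym2 (Fin n))) :=
                Sym2.mem_mk_right _ _
              rwa [sym2_mk_inf_sup] at hm
            exact perm_count_le _ _ (hFb _ hinf) (hFb _ hsup)
          · rw [if_neg he, if_neg he, Finset.card_univ, Fintype.card_perm, Fintype.card_fin]
      _ = ((a - b).descFactorial b * Nat.factorial (a - b)) ^ H.edgeSet.ncard *
            Nat.factorial a ^ (G.edgeSet.ncard - H.edgeSet.ncard) := by
          rw [Finset.prod_ite, Finset.prod_const, Finset.prod_const, hm'card, hfneg]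
  have h𝓕card : 𝓕.card = a.choose b ^ H.verts.ncard := by
    rw [h𝓕, Fintype.card_piFinset]
    have : ∀ v : Fin n, ((if v ∈ HVf then (univ : Finset (Fin a)).powersetCard b
        else {(∅ : Finset (Fin a))}).card) = if v ∈ HVf then a.choose b else 1 := by
      intro v
      split
      · rw [Finset.card_powersetCard, Finset.card_univ, Fintype.card_fin]
      · rw [Finset.card_singleton]
    rw [Finset.prod_congr rfl fun v _ => this v, Finset.prod_ite, Finset.prod_const,
      Finset.prod_const, one_pow, mul_one, Finset.filter_univ_mem]
    congr 1
    rw [hHVf, ← Set.ncard_eq_toFinset_card']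
  calc Nat.card {σ : G.edgeSet → Equiv.Perm (Fin a) //
        ∃ T : Finset (Fin n × Fin a), IsIndepTransversal G a b σ T}
      = (univ.filter (fun σ : E → Equiv.Perm (Fin a) =>
          ∃ T : Finset (Fin n × Fin a), IsIndepTransversal G a b σ T)).card := hnum
    _ ≤ (𝓕.biUnion AF).card := Finset.card_le_card hsub
    _ ≤ ∑ F ∈ 𝓕, (AF F).card := Finset.card_biUnion_le
    _ ≤ 𝓕.card • (((a - b).descFactorial b * Nat.factorial (a - b)) ^ H.edgeSet.ncard *
          Nat.factorial a ^ (G.edgeSet.ncard - H.edgeSet.ncard)) :=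
        Finset.sum_le_card_nsmul _ _ _ hAFcard
    _ = _ := by rw [smul_eq_mul, h𝓕card]


lemma exists_max_subgraph (n : ℕ) (hn : 0 < n) (G : SimpleGraph (Fin n)) :
    ∃ H : G.Subgraph, H.verts.Nonempty ∧
      maxDensity G = (H.edgeSet.ncard : ℝ) / (H.verts.ncard : ℝ) := by
  classical
  set S := {d : ℝ | ∃ H : G.Subgraph, H.verts.Nonempty ∧
    d = (H.edgeSet.ncard : ℝ) / (H.verts.ncard : ℝ)} with hS
  have hne : S.Nonempty := by
    refine ⟨_, G.singletonSubgraph ⟨0, hn⟩, ?_, rfl⟩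
    simp [SimpleGraph.singletonSubgraph]
  have hfin : S.Finite := by
    set N := Nat.card (Sym2 (Fin n)) with hN
    have : S ⊆ Set.range (fun p : Fin (N + 1) × Fin (n + 1) =>
        ((p.1 : ℕ) : ℝ) / ((p.2 : ℕ) : ℝ)) := by
      rintro d ⟨H, hHne, rfl⟩
      have he : H.edgeSet.ncard ≤ N := by
        rw [hN, ← Set.ncard_univ]
        exact Set.ncard_le_ncard (Set.subset_univ _) Set.finite_univ
      have hv : H.verts.ncard ≤ n := by
        have : H.verts.ncard ≤ Nat.card (Fin n) := by
          rw [← Set.ncard_univ]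
          exact Set.ncard_le_ncard (Set.subset_univ _) Set.finite_univ
        simpa using this
      exact ⟨(⟨H.edgeSet.ncard, by omega⟩, ⟨H.verts.ncard, by omega⟩), rfl⟩
    exact Set.Finite.subset (Set.finite_range _) this
  have hmem : sSup S ∈ S := hne.csSup_mem hfin
  obtain ⟨H, hHne, hval⟩ := hmem
  exact ⟨H, hHne, hval⟩


/-- Let `ε > 0` and let `G` be a nonempty graph with `ρ(G) ≥ exp(e/ε)`. Let `k` be a
real number with `1 ≤ k ≤ ρ(G)/ln ρ(G)`. Then for all positive integers `a`, `b` with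
`a/b ≤ k`, `G` is `(a,b)`-DP-colorable with probability at most `ε`. -/
theorem statement_4 (ε : ℝ) (hε : 0 < ε) (n : ℕ) (hn : 0 < n)
    (G : SimpleGraph (Fin n)) (hρ : Real.exp (Real.exp 1 / ε) ≤ maxDensity G)
    (k : ℝ) (hk1 : 1 ≤ k) (hk2 : k ≤ maxDensity G / Real.log (maxDensity G)) :
    ∀ a b : ℕ, 0 < a → 0 < b → (a : ℝ) / (b : ℝ) ≤ k →
      probColorable G a b ≤ ε := by
  intro a b ha hb habk
  classical
  -- trivial case ε ≥ 1
  rcases le_or_gt 1 ε with hε1 | hε1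
  · refine le_trans ?_ hε1
    unfold probColorable
    refine div_le_one_of_le₀ ?_ (by positivity)
    exact_mod_cast Finite.card_subtype_le _
  -- main case
  obtain ⟨H, hHne, hval⟩ := exists_max_subgraph n hn G
  set ρ := maxDensity G with hρdef
  have hρpos : (0 : ℝ) < ρ := lt_of_lt_of_le (Real.exp_pos _) hρ
  have hn'pos : 0 < H.verts.ncard := (Set.ncard_pos (Set.toFinite _)).mpr hHne
  have hn'ne : ((H.verts.ncard : ℕ) : ℝ) ≠ 0 := by
    exact_mod_cast hn'pos.ne'
  have hm'pos : 0 < H.edgeSet.ncard := by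
    by_contra hcon
    have h0 : H.edgeSet.ncard = 0 := by omega
    rw [hval, h0] at hρpos
    simp at hρpos
  have hm : ((H.edgeSet.ncard : ℕ) : ℝ) = ρ * H.verts.ncard := by
    rw [hval]
    field_simp
  -- notation
  set m := G.edgeSet.ncard with hmdef
  set m' := H.edgeSet.ncard with hm'def
  set n' := H.verts.ncard with hn'def
  have hm'le : m' ≤ m := Set.ncard_le_ncard H.edgeSet_subset (Set.toFinite _)
  have hfa : (0 : ℝ) < (Nat.factorial a : ℝ) := by
    exact_mod_cast Nat.factorial_pos a
  -- denominator
  have hden : (Nat.card (G.edgeSet → Equiv.Perm (Fin a)) : ℝ)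
      = (Nat.factorial a : ℝ) ^ m := by
    rw [Nat.card_fun, Nat.card_eq_fintype_card (α := Equiv.Perm (Fin a)),
      Fintype.card_perm, Fintype.card_fin, Nat.card_coe_set_eq]
    push_cast
    rfl
  -- numerator bound
  have hnum : (Nat.card {σ : G.edgeSet → Equiv.Perm (Fin a) //
        ∃ T : Finset (Fin n × Fin a), IsIndepTransversal G a b σ T} : ℝ)
      ≤ (a.choose b : ℝ) ^ n' *
        ((((a - b).descFactorial b : ℝ) * (Nat.factorial (a - b) : ℝ)) ^ m' *
          (Nat.factorial a : ℝ) ^ (m - m')) := by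
    have := main_count n a b G H
    have h2 := (Nat.cast_le (α := ℝ)).mpr this
    refine h2.trans_eq ?_
    push_cast
    ring
  -- probability bound
  have hP : probColorable G a b ≤ (a.choose b : ℝ) ^ n' *
      ((((a - b).descFactorial b : ℝ) * (Nat.factorial (a - b) : ℝ)) /
        (Nat.factorial a : ℝ)) ^ m' := by
    unfold probColorable
    rw [hden]
    have hsplit : (Nat.factorial a : ℝ) ^ m
        = (Nat.factorial a : ℝ) ^ m' * (Nat.factorial a : ℝ) ^ (m - m') := by
      rw [← pow_add]
      congr 1
      omega
    have heq : (a.choose b : ℝ) ^ n' *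
        ((((a - b).descFactorial b : ℝ) * (Nat.factorial (a - b) : ℝ)) /
          (Nat.factorial a : ℝ)) ^ m'
        = ((a.choose b : ℝ) ^ n' *
          ((((a - b).descFactorial b : ℝ) * (Nat.factorial (a - b) : ℝ)) ^ m' *
            (Nat.factorial a : ℝ) ^ (m - m'))) / (Nat.factorial a : ℝ) ^ m := by
      rw [div_pow, hsplit]
      field_simp
    rw [heq]
    exact (div_le_div_iff_of_pos_right (by positivity)).mpr hnum
  rcases le_or_gt (2 * b) a with h2b | h2b
  · exact hP.trans
      (analytic_bound ε ρ k a b n' m' hε hε1 hb h2b hn'pos hm hρ hk1 hk2 habk)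
  · have hc0 : (a - b).descFactorial b = 0 :=
      Nat.descFactorial_eq_zero_iff_lt.mpr (by omega)
    refine hP.trans ?_
    rw [hc0]
    push_cast
    rw [zero_mul, zero_div, zero_pow hm'pos.ne', mul_zero]
    exact hε.le

end DP
end

section
/- Let a, b, t be positive integers with b ≤ a, let S_1, …, S_t be independent random sets each chosen uniformly at random among all b-element subsets of [a] = {1,…,a}, and let S = S_1 ∪ ⋯ ∪ S_t. Then for every subset I ⊆ [a] and every j ∈ [a] \ I, one has P(I ⊆ S and j ∉ S) ≥ P(I ⊆ S) · P(j ∉ S). -/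
namespace DP

/-- A `b`-element subset of `[a] = {1, …, a}`. -/
def BSubset (a b : ℕ) : Type := {s : Finset (Fin a) // s.card = b}

/-- The probability of an event about a uniformly random tuple `(S_1, …, S_t)` of
`b`-element subsets of `[a]`: the fraction of tuples for which the event holds. -/
noncomputable def tupleProb (a b t : ℕ) (P : (Fin t → BSubset a b) → Prop) : ℝ :=
  (Nat.card {f : Fin t → BSubset a b // P f} : ℝ) /
    (Nat.card (Fin t → BSubset a b) : ℝ)

open Finset

instance instDecEqBSubset (a b : ℕ) : DecidableEq (BSubset a b) :=
  fun S T => decidable_of_iff (S.1 = T.1) Subtype.ext_iff.symm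

instance instFintypeBSubset (a b : ℕ) : Fintype (BSubset a b) :=
  Subtype.fintype _

/-- The weight function for the double-counting argument. -/
def w (a b : ℕ) (j : Fin a) (S T : BSubset a b) : ℕ :=
  if j ∉ T.1 ∧ S.1.erase j ⊆ T.1 ∧ (j ∈ S.1 ∨ T = S) then (if j ∈ S.1 then 1 else a - b)
  else 0

lemma w_ne_zero {a b : ℕ} {j : Fin a} {S T : BSubset a b} (h : w a b j S T ≠ 0) :
    j ∉ T.1 ∧ S.1.erase j ⊆ T.1 := by
  by_cases h1 : j ∉ T.1 ∧ S.1.erase j ⊆ T.1 ∧ (j ∈ S.1 ∨ T = S)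
  · exact ⟨h1.1, h1.2.1⟩
  · exact absurd (by simp [w, h1]) h

lemma sum_pi_prod {ι β : Type*} [Fintype ι] [DecidableEq ι] [Fintype β] (F : ι → β → ℕ) :
    ∑ f : ι → β, ∏ r, F r (f r) = ∏ r, ∑ S, F r S := by
  classical
  rw [Finset.prod_univ_sum, Fintype.piFinset_univ]

lemma sum_ind {α : Type*} [Fintype α] (p : α → Prop) [DecidablePred p] :
    ∑ x : α, (if p x then 1 else 0) = (univ.filter p).card := by
  simp [Finset.sum_boole]

lemma rowsum (a b : ℕ) (hba : b ≤ a) (j : Fin a) (S : BSubset a b) :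
    ∑ T : BSubset a b, w a b j S T = a - b := by
  classical
  by_cases hjS : j ∈ S.1
  · have hb1 : 0 < b := by
      rw [← S.2]; exact card_pos.mpr ⟨j, hjS⟩
    have hw : ∀ T : BSubset a b, w a b j S T
        = if (j ∉ T.1 ∧ S.1.erase j ⊆ T.1) then 1 else 0 := by
      intro T
      unfold w
      by_cases h1 : j ∉ T.1
      · by_cases h2 : S.1.erase j ⊆ T.1 <;> simp [h1, h2, hjS]
      · simp [h1]
    rw [Finset.sum_congr rfl fun T _ => hw T, sum_ind]
    have key : (S.1ᶜ).card
        = (univ.filter (fun T : BSubset a b => j ∉ T.1 ∧ S.1.erase j ⊆ T.1)).card := by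
      apply Finset.card_bij (fun x hx => (⟨insert x (S.1.erase j), by
        have hx' : x ∉ S.1 := by simpa using hx
        have hxe : x ∉ S.1.erase j := fun h => hx' (mem_of_mem_erase h)
        rw [card_insert_of_notMem hxe, card_erase_of_mem hjS, S.2,
          Nat.sub_add_cancel hb1]⟩ : BSubset a b))
      · intro x hx
        have hx' : x ∉ S.1 := by simpa using hx
        have hxj : x ≠ j := fun h => hx' (h ▸ hjS)
        refine mem_filter.mpr ⟨mem_univ _, ?_⟩
        constructor
        · simp [Finset.mem_insert, Finset.mem_erase, hxj, Ne.symm hxj]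
        · exact subset_insert _ _
      · intro x hx y hy hxy
        have hx' : x ∉ S.1 := by simpa using hx
        have heq : insert x (S.1.erase j) = insert y (S.1.erase j) :=
          congrArg (fun T : BSubset a b => T.1) hxy
        have hxmem : x ∈ insert y (S.1.erase j) := heq ▸ mem_insert_self x _
        rcases mem_insert.mp hxmem with h | h
        · exact h
        · exact absurd (mem_of_mem_erase h) hx'
      · intro T hT
        replace hT := (mem_filter.mp hT).2
        obtain ⟨hjT, hsub⟩ := hT
        have hcard : (T.1 \ S.1.erase j).card = 1 := by
          rw [card_sdiff_of_subset hsub, T.2, card_erase_of_mem hjS, S.2]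
          omega
        obtain ⟨x, hx⟩ := Finset.card_eq_one.mp hcard
        have hxT : x ∈ T.1 ∧ x ∉ S.1.erase j :=
          Finset.mem_sdiff.mp (by rw [hx]; exact mem_singleton_self x)
        have hxj : x ≠ j := fun h => hjT (h ▸ hxT.1)
        have hxS : x ∉ S.1 := fun h => hxT.2 (Finset.mem_erase.mpr ⟨hxj, h⟩)
        refine ⟨x, by simpa using hxS, ?_⟩
        apply Subtype.ext
        apply Finset.eq_of_subset_of_card_le
        · intro y hy
          rcases mem_insert.mp hy with h | h
          · exact h ▸ hxT.1
          · exact hsub h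
        · rw [T.2, card_insert_of_notMem hxT.2, card_erase_of_mem hjS, S.2,
            Nat.sub_add_cancel hb1]
    rw [← key, Finset.card_compl, S.2, Fintype.card_fin]
  · have hw : ∀ T : BSubset a b, w a b j S T = if T = S then a - b else 0 := by
      intro T
      unfold w
      by_cases hTS : T = S
      · subst hTS
        simp [hjS, Finset.erase_eq_of_notMem hjS]
      · simp [hjS, hTS]
    rw [Finset.sum_congr rfl fun T _ => hw T]
    simp

lemma colsum (a b : ℕ) (hba : b ≤ a) (j : Fin a) (T : BSubset a b) (hjT : j ∉ T.1) :
    ∑ S : BSubset a b, w a b j S T = a := by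
  classical
  have hw : ∀ S : BSubset a b, w a b j S T
      = (if j ∈ S.1 ∧ S.1.erase j ⊆ T.1 then 1 else 0) + (if S = T then a - b else 0) := by
    intro S
    unfold w
    by_cases hjS : j ∈ S.1
    · have hST : S ≠ T := fun h => hjT (h ▸ hjS)
      have hTS : T ≠ S := fun h => hST h.symm
      by_cases h2 : S.1.erase j ⊆ T.1 <;> simp [hjS, h2, hjT, hST, hTS]
    · by_cases hST : S = T
      · subst hST
        simp [hjS, hjT, Finset.erase_eq_of_notMem hjS]
      · have hTS : T ≠ S := fun h => hST h.symm
        simp [hjS, hST, hTS]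
  rw [Finset.sum_congr rfl fun S _ => hw S, Finset.sum_add_distrib]
  have h2 : ∑ S : BSubset a b, (if S = T then a - b else 0) = a - b := by simp
  have h1 : ∑ S : BSubset a b, (if j ∈ S.1 ∧ S.1.erase j ⊆ T.1 then 1 else 0) = b := by
    rw [sum_ind]
    have key : T.1.card
        = (univ.filter (fun S : BSubset a b => j ∈ S.1 ∧ S.1.erase j ⊆ T.1)).card := by
      apply Finset.card_bij (fun x hx => (⟨insert j (T.1.erase x), by
        have hje : j ∉ T.1.erase x := fun h => hjT (mem_of_mem_erase h)
        have hb1 : 0 < b := by rw [← T.2]; exact card_pos.mpr ⟨x, hx⟩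
        rw [card_insert_of_notMem hje, card_erase_of_mem hx, T.2,
          Nat.sub_add_cancel hb1]⟩ : BSubset a b))
      · intro x hx
        have hje : j ∉ T.1.erase x := fun h => hjT (mem_of_mem_erase h)
        refine mem_filter.mpr ⟨mem_univ _, ?_⟩
        constructor
        · exact mem_insert_self _ _
        · rw [Finset.erase_insert hje]
          exact erase_subset _ _
      · intro x hx y hy hxy
        have heq : insert j (T.1.erase x) = insert j (T.1.erase y) :=
          congrArg (fun S : BSubset a b => S.1) hxy
        have hje1 : j ∉ T.1.erase x := fun h => hjT (mem_of_mem_erase h)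
        have hje2 : j ∉ T.1.erase y := fun h => hjT (mem_of_mem_erase h)
        have heq2 : T.1.erase x = T.1.erase y := by
          rw [← Finset.erase_insert hje1, ← Finset.erase_insert hje2, heq]
        by_contra hne
        have : x ∈ T.1.erase y := Finset.mem_erase.mpr ⟨hne, hx⟩
        rw [← heq2] at this
        exact (Finset.notMem_erase x T.1) this
      · intro S hS
        replace hS := (mem_filter.mp hS).2
        obtain ⟨hjS, hsub⟩ := hS
        have hb1 : 0 < b := by rw [← S.2]; exact card_pos.mpr ⟨j, hjS⟩
        have hcard : (T.1 \ S.1.erase j).card = 1 := by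
          rw [card_sdiff_of_subset hsub, T.2, card_erase_of_mem hjS, S.2]
          omega
        obtain ⟨x, hx⟩ := Finset.card_eq_one.mp hcard
        have hxT : x ∈ T.1 ∧ x ∉ S.1.erase j :=
          Finset.mem_sdiff.mp (by rw [hx]; exact mem_singleton_self x)
        refine ⟨x, hxT.1, ?_⟩
        apply Subtype.ext
        have herase : T.1.erase x = S.1.erase j := by
          apply (Finset.eq_of_subset_of_card_le ?_ ?_).symm
          · intro y hy
            refine Finset.mem_erase.mpr ⟨?_, hsub hy⟩
            intro hyx
            exact hxT.2 (hyx ▸ hy)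
          · rw [card_erase_of_mem hxT.1, card_erase_of_mem hjS, S.2, T.2]
        show insert j (T.1.erase x) = S.1
        rw [herase, Finset.insert_erase hjS]
    rw [← key, T.2]
  rw [h1, h2]
  omega

lemma omega_id (a b : ℕ) (hba : b ≤ a) (j : Fin a) :
    a * (univ.filter (fun S : BSubset a b => j ∉ S.1)).card
      = (a - b) * Fintype.card (BSubset a b) := by
  classical
  have h1 : ∑ S : BSubset a b, ∑ T : BSubset a b, w a b j S T
      = (a - b) * Fintype.card (BSubset a b) := by
    rw [Finset.sum_congr rfl fun S _ => rowsum a b hba j S, Finset.sum_const,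
      smul_eq_mul, card_univ, mul_comm]
  have h2 : ∑ T : BSubset a b, ∑ S : BSubset a b, w a b j S T
      = a * (univ.filter (fun T : BSubset a b => j ∉ T.1)).card := by
    have hstep : ∀ T : BSubset a b, (∑ S : BSubset a b, w a b j S T)
        = if j ∉ T.1 then a else 0 := by
      intro T
      by_cases hT : j ∉ T.1
      · rw [colsum a b hba j T hT, if_pos hT]
      · rw [if_neg hT]
        apply Finset.sum_eq_zero
        intro S _
        unfold w
        rw [if_neg]
        intro h
        exact hT h.1
    rw [Finset.sum_congr rfl fun T _ => hstep T, Finset.sum_ite, Finset.sum_const,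
      Finset.sum_const_zero, add_zero, smul_eq_mul, mul_comm]
  rw [← h2, Finset.sum_comm, h1]

lemma main_count_s13 (a b t : ℕ) (hba : b ≤ a) (I : Finset (Fin a)) (j : Fin a) (hj : j ∉ I) :
    (a - b) ^ t * (univ.filter
        (fun f : Fin t → BSubset a b => ∀ i ∈ I, ∃ r, i ∈ (f r).1)).card
      ≤ a ^ t * (univ.filter (fun f : Fin t → BSubset a b =>
          (∀ i ∈ I, ∃ r, i ∈ (f r).1) ∧ ∀ r, j ∉ (f r).1)).card := by
  classical
  have lhs_eq : (a - b) ^ t * (univ.filter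
      (fun f : Fin t → BSubset a b => ∀ i ∈ I, ∃ r, i ∈ (f r).1)).card
      = ∑ f : Fin t → BSubset a b, ∑ g : Fin t → BSubset a b,
          (if ∀ i ∈ I, ∃ r, i ∈ (f r).1 then 1 else 0) * ∏ r, w a b j (f r) (g r) := by
    have hsum : ∀ f : Fin t → BSubset a b,
        ∑ g : Fin t → BSubset a b, ∏ r, w a b j (f r) (g r) = (a - b) ^ t := by
      intro f
      rw [← Fintype.piFinset_univ, ← Finset.prod_univ_sum]
      rw [Finset.prod_congr rfl fun r _ => rowsum a b hba j (f r)]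
      simp
    have step : ∀ f : Fin t → BSubset a b,
        (∑ g : Fin t → BSubset a b,
          (if ∀ i ∈ I, ∃ r, i ∈ (f r).1 then 1 else 0) * ∏ r, w a b j (f r) (g r))
        = (if ∀ i ∈ I, ∃ r, i ∈ (f r).1 then 1 else 0) * (a - b) ^ t := by
      intro f
      rw [← Finset.mul_sum, hsum f]
    rw [Finset.sum_congr rfl fun f _ => step f, ← Finset.sum_mul, sum_ind, mul_comm]
  have rhs_eq : ∑ f : Fin t → BSubset a b, ∑ g : Fin t → BSubset a b,
        (if (∀ i ∈ I, ∃ r, i ∈ (g r).1) ∧ ∀ r, j ∉ (g r).1 then 1 else 0)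
          * ∏ r, w a b j (f r) (g r)
      = a ^ t * (univ.filter (fun f : Fin t → BSubset a b =>
          (∀ i ∈ I, ∃ r, i ∈ (f r).1) ∧ ∀ r, j ∉ (f r).1)).card := by
    rw [Finset.sum_comm]
    have step : ∀ g : Fin t → BSubset a b,
        (∑ f : Fin t → BSubset a b,
          (if (∀ i ∈ I, ∃ r, i ∈ (g r).1) ∧ ∀ r, j ∉ (g r).1 then 1 else 0)
            * ∏ r, w a b j (f r) (g r))
        = if (∀ i ∈ I, ∃ r, i ∈ (g r).1) ∧ ∀ r, j ∉ (g r).1 then a ^ t else 0 := by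
      intro g
      rw [← Finset.mul_sum]
      by_cases hg : (∀ i ∈ I, ∃ r, i ∈ (g r).1) ∧ ∀ r, j ∉ (g r).1
      · rw [if_pos hg, if_pos hg, one_mul]
        calc ∑ f : Fin t → BSubset a b, ∏ r, w a b j (f r) (g r)
            = ∏ r : Fin t, ∑ S : BSubset a b, w a b j S (g r) :=
              sum_pi_prod (fun r S => w a b j S (g r))
          _ = a ^ t := by
              rw [Finset.prod_congr rfl fun r _ => colsum a b hba j (g r) (hg.2 r)]
              simp
      · rw [if_neg hg, if_neg hg, zero_mul]
    rw [Finset.sum_congr rfl fun g _ => step g, Finset.sum_ite, Finset.sum_const,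
      Finset.sum_const_zero, add_zero, smul_eq_mul, mul_comm]
  rw [lhs_eq, ← rhs_eq]
  apply Finset.sum_le_sum
  intro f _
  apply Finset.sum_le_sum
  intro g _
  by_cases hp : (∏ r, w a b j (f r) (g r)) = 0
  · rw [hp, mul_zero, mul_zero]
  · have hwr : ∀ r, w a b j (f r) (g r) ≠ 0 := by
      intro r hr
      exact hp (Finset.prod_eq_zero (mem_univ r) hr)
    by_cases hAf : ∀ i ∈ I, ∃ r, i ∈ (f r).1
    · have hB : ∀ r, j ∉ (g r).1 := fun r => (w_ne_zero (hwr r)).1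
      have hAg : ∀ i ∈ I, ∃ r, i ∈ (g r).1 := by
        intro i hi
        obtain ⟨r, hr⟩ := hAf i hi
        exact ⟨r, (w_ne_zero (hwr r)).2 (Finset.mem_erase.mpr ⟨fun h => hj (h ▸ hi), hr⟩)⟩
      rw [if_pos hAf, if_pos ⟨hAg, hB⟩]
    · rw [if_neg hAf, zero_mul]
      exact Nat.zero_le _

lemma bsubset_nonempty (a b : ℕ) (hba : b ≤ a) : Nonempty (BSubset a b) := by
  obtain ⟨s, -, hs⟩ := Finset.exists_subset_card_eq (s := (univ : Finset (Fin a))) (n := b) (by simpa using hba)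
  exact ⟨⟨s, hs⟩⟩

/-- If `S_1, …, S_t` are independent uniformly random `b`-element subsets of `[a]`
and `S = S_1 ∪ ⋯ ∪ S_t`, then for every `I ⊆ [a]` and `j ∈ [a] \ I`,
`P(I ⊆ S ∧ j ∉ S) ≥ P(I ⊆ S) · P(j ∉ S)`. -/
theorem statement_13 (a b t : ℕ) (ha : 0 < a) (hb : 0 < b) (ht : 0 < t)
    (hba : b ≤ a) (I : Finset (Fin a)) (j : Fin a) (hj : j ∉ I) :
    tupleProb a b t (fun f => (∀ i ∈ I, ∃ r : Fin t, i ∈ (f r).1) ∧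
        ∀ r : Fin t, j ∉ (f r).1) ≥
      tupleProb a b t (fun f => ∀ i ∈ I, ∃ r : Fin t, i ∈ (f r).1) *
        tupleProb a b t (fun f => ∀ r : Fin t, j ∉ (f r).1) := by
  classical
  have hne : Nonempty (BSubset a b) := bsubset_nonempty a b hba
  set N := Fintype.card (BSubset a b) with hN
  set M := (univ.filter (fun S : BSubset a b => j ∉ S.1)).card with hM
  have hMN : a * M = (a - b) * N := omega_id a b hba j
  -- natural number cards
  have hcardAB : Nat.card {f : Fin t → BSubset a b //
      (∀ i ∈ I, ∃ r : Fin t, i ∈ (f r).1) ∧ ∀ r : Fin t, j ∉ (f r).1}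
      = (univ.filter (fun f : Fin t → BSubset a b =>
          (∀ i ∈ I, ∃ r, i ∈ (f r).1) ∧ ∀ r, j ∉ (f r).1)).card := by
    rw [Nat.card_eq_fintype_card, Fintype.card_subtype]
  have hcardA : Nat.card {f : Fin t → BSubset a b // ∀ i ∈ I, ∃ r : Fin t, i ∈ (f r).1}
      = (univ.filter (fun f : Fin t → BSubset a b => ∀ i ∈ I, ∃ r, i ∈ (f r).1)).card := by
    rw [Nat.card_eq_fintype_card, Fintype.card_subtype]
  have hcardB : Nat.card {f : Fin t → BSubset a b // ∀ r : Fin t, j ∉ (f r).1}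
      = M ^ t := by
    have e : {f : Fin t → BSubset a b // ∀ r : Fin t, j ∉ (f r).1}
        ≃ (Fin t → {S : BSubset a b // j ∉ S.1}) :=
      Equiv.subtypePiEquivPi (p := fun (_ : Fin t) (S : BSubset a b) => j ∉ S.1)
    rw [Nat.card_congr e, Nat.card_eq_fintype_card, Fintype.card_fun, Fintype.card_fin,
      Fintype.card_subtype]
  have hcardTot : Nat.card (Fin t → BSubset a b) = N ^ t := by
    rw [Nat.card_eq_fintype_card, Fintype.card_fun, Fintype.card_fin]
  set NA := (univ.filter (fun f : Fin t → BSubset a b => ∀ i ∈ I, ∃ r, i ∈ (f r).1)).card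
  set NAB := (univ.filter (fun f : Fin t → BSubset a b =>
      (∀ i ∈ I, ∃ r, i ∈ (f r).1) ∧ ∀ r, j ∉ (f r).1)).card
  have hmc : (a - b) ^ t * NA ≤ a ^ t * NAB := main_count_s13 a b t hba I j hj
  have key : NA * M ^ t ≤ NAB * N ^ t := by
    have h1 : a ^ t * (NA * M ^ t) ≤ a ^ t * (NAB * N ^ t) := by
      calc a ^ t * (NA * M ^ t) = NA * (a * M) ^ t := by ring
        _ = NA * ((a - b) * N) ^ t := by rw [hMN]
        _ = ((a - b) ^ t * NA) * N ^ t := by ring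
        _ ≤ (a ^ t * NAB) * N ^ t := Nat.mul_le_mul_right _ hmc
        _ = a ^ t * (NAB * N ^ t) := by ring
    exact Nat.le_of_mul_le_mul_left h1 (pow_pos ha t)
  -- pass to reals
  have hNpos : 0 < N := Fintype.card_pos
  have hDpos : (0 : ℝ) < (Nat.card (Fin t → BSubset a b) : ℝ) := by
    rw [hcardTot]
    exact_mod_cast pow_pos hNpos t
  unfold tupleProb
  rw [ge_iff_le, div_mul_div_comm, div_le_div_iff₀ (by positivity) hDpos]
  rw [hcardA, hcardB, hcardAB, hcardTot]
  have : ((NA : ℝ) * (M ^ t : ℕ)) ≤ (NAB : ℝ) * (N ^ t : ℕ) := by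
    exact_mod_cast key
  calc (NA : ℝ) * (M ^ t : ℕ) * (N ^ t : ℕ)
      ≤ (NAB : ℝ) * (N ^ t : ℕ) * (N ^ t : ℕ) :=
        mul_le_mul_of_nonneg_right this (by positivity)
    _ = (NAB : ℝ) * ((N ^ t : ℕ) * (N ^ t : ℕ)) := by ring

end DP
end
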